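/- arXiv:2203.09190 — 2 statements merged into one kernel-verified Lean document; each statement's English description precedes it below -/
import Mathlib

section
/- Lemma II: Assume the radial network encoding with parameters r, x, g, b : Fin n → ℝ entrywise nonnegative, net consumptions p, q : Fin n → ℝ, slack squared voltage v₀ > 0, and limits v^min, v^max, I^max : Fin n → ℝ. Assume the matrix A := 1 − Gᵀ + M₁ + M₂ is invertible (condition (8.a)) and every entry of D is nonnegative (condition (8.b)), where M₁ := 2·diag(r)·H·diag(g), M₂ := 2·diag(x)·H·diag(b), C := A⁻¹, and D := 2·C·diag(r)·(H − 1)·diag(r) + 2·C·diag(x)·(H − 1)·diag(x) + C·diag(fun l => (r l)^2 + (x l)^2). Suppose (P, Q, v, f) with v l > 0 satisfies the exact DistFlow equations (1.a)–(1.c), and suppose there exist auxiliary variables (P̂, Q̂, v̂, P̲, Q̲, P̄, Q̄, f̄) satisfying the lossless equations (3.a)–(3.b), the bound equations (3.c)–(3.e), and the security bounds v l ≥ v^min l, v̂ l ≤ v^max l, and f̄ l ≤ I^max l for all l. Then the exact solution itself satisfies the original security constraints: v^min l ≤ v l ≤ v^max l and f l ≤ I^max l for all l. -/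
open Matrix

noncomputable section

/-- Adjacency matrix of the radial network: `G k l = 1` iff `up l = some k`. -/
def Gmat {n : ℕ} (up : Fin n → Option (Fin n)) : Matrix (Fin n) (Fin n) ℝ :=
  Matrix.of fun k l => if up l = some k then (1 : ℝ) else 0

/-- Sum of a vector over the children of bus `l`. -/
def csum {n : ℕ} (up : Fin n → Option (Fin n)) (P : Fin n → ℝ) (l : Fin n) : ℝ :=
  ∑ m ∈ Finset.univ.filter (fun m => up m = some l), P m

def Hmat {n : ℕ} (up : Fin n → Option (Fin n)) : Matrix (Fin n) (Fin n) ℝ :=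
  (1 - Gmat up)⁻¹

def M1 {n : ℕ} (up : Fin n → Option (Fin n)) (r g : Fin n → ℝ) :
    Matrix (Fin n) (Fin n) ℝ :=
  (2 : ℝ) • (diagonal r * Hmat up * diagonal g)

def M2 {n : ℕ} (up : Fin n → Option (Fin n)) (x b : Fin n → ℝ) :
    Matrix (Fin n) (Fin n) ℝ :=
  (2 : ℝ) • (diagonal x * Hmat up * diagonal b)

def Amat {n : ℕ} (up : Fin n → Option (Fin n)) (r x g b : Fin n → ℝ) :
    Matrix (Fin n) (Fin n) ℝ :=
  1 - (Gmat up)ᵀ + M1 up r g + M2 up x b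

def Cmat {n : ℕ} (up : Fin n → Option (Fin n)) (r x g b : Fin n → ℝ) :
    Matrix (Fin n) (Fin n) ℝ :=
  (Amat up r x g b)⁻¹

def Dmat {n : ℕ} (up : Fin n → Option (Fin n)) (r x g b : Fin n → ℝ) :
    Matrix (Fin n) (Fin n) ℝ :=
  (2 : ℝ) • (Cmat up r x g b * diagonal r * (Hmat up - 1) * diagonal r)
    + (2 : ℝ) • (Cmat up r x g b * diagonal x * (Hmat up - 1) * diagonal x)
    + Cmat up r x g b * diagonal (fun l => (r l) ^ 2 + (x l) ^ 2)

section helpers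
variable {n : ℕ} {up : Fin n → Option (Fin n)}

lemma csum_eq (P : Fin n → ℝ) (l : Fin n) : csum up P l = (Gmat up *ᵥ P) l := by
  simp [csum, Finset.sum_filter, Matrix.mulVec, dotProduct, Gmat, ite_mul]

lemma csum_sub (X Y : Fin n → ℝ) (l : Fin n) :
    csum up (fun m => X m - Y m) l = csum up X l - csum up Y l := by
  simp [csum, Finset.sum_sub_distrib]

lemma Gpow_entry (hup : ∀ l k, up l = some k → (k : ℕ) < (l : ℕ)) :
    ∀ (m : ℕ) (k l : Fin n), (Gmat up ^ m) k l ≠ 0 → (k : ℕ) + m ≤ (l : ℕ) := by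
  intro m
  induction m with
  | zero =>
    intro k l h
    simp only [pow_zero, Matrix.one_apply, ne_eq, ite_eq_right_iff, Classical.not_imp] at h
    obtain ⟨rfl, -⟩ := h
    omega
  | succ m ih =>
    intro k l h
    rw [pow_succ] at h
    have := Finset.exists_ne_zero_of_sum_ne_zero (by simpa [Matrix.mul_apply] using h)
    obtain ⟨j, -, hj⟩ := this
    have h1 : (Gmat up ^ m) k j ≠ 0 := fun hc => hj (by simp [hc])
    have h2 : (Gmat up) j l ≠ 0 := fun hc => hj (by simp [hc])
    have h3 : up l = some j := by
      by_contra hc; exact h2 (by simp [Gmat, hc])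
    have := hup l j h3
    have := ih k j h1
    omega

lemma Gpow_nonneg : ∀ (m : ℕ) (k l : Fin n), 0 ≤ (Gmat up ^ m) k l := by
  intro m
  induction m with
  | zero => intro k l; rw [pow_zero, Matrix.one_apply]; positivity
  | succ m ih =>
    intro k l
    rw [pow_succ, Matrix.mul_apply]
    refine Finset.sum_nonneg fun j _ => mul_nonneg (ih k j) ?_
    simp only [Gmat, Matrix.of_apply]
    positivity

lemma Gpow_n (hup : ∀ l k, up l = some k → (k : ℕ) < (l : ℕ)) : Gmat up ^ n = 0 := by
  ext k l
  by_contra h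
  have := Gpow_entry hup n k l (by simpa using h)
  have := l.isLt
  omega

lemma Hmat_eq (hup : ∀ l k, up l = some k → (k : ℕ) < (l : ℕ)) :
    Hmat up = ∑ i ∈ Finset.range n, Gmat up ^ i := by
  apply Matrix.inv_eq_left_inv
  have := geom_sum_mul (Gmat up) n
  rw [Gpow_n hup] at this
  calc (∑ i ∈ Finset.range n, Gmat up ^ i) * (1 - Gmat up)
      = -((∑ i ∈ Finset.range n, Gmat up ^ i) * (Gmat up - 1)) := by noncomm_ring
    _ = 1 := by rw [this]; noncomm_ring

lemma Hmat_mul_cancel (hup : ∀ l k, up l = some k → (k : ℕ) < (l : ℕ)) :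
    Hmat up * (1 - Gmat up) = 1 := by
  rw [Hmat_eq hup]
  have := geom_sum_mul (Gmat up) n
  rw [Gpow_n hup] at this
  calc (∑ i ∈ Finset.range n, Gmat up ^ i) * (1 - Gmat up)
      = -((∑ i ∈ Finset.range n, Gmat up ^ i) * (Gmat up - 1)) := by noncomm_ring
    _ = 1 := by rw [this]; noncomm_ring

lemma mul_Hmat_cancel (hup : ∀ l k, up l = some k → (k : ℕ) < (l : ℕ)) :
    (1 - Gmat up) * Hmat up = 1 :=
  mul_eq_one_comm.mp (Hmat_mul_cancel hup)

lemma Hsub_apply (hup : ∀ l k, up l = some k → (k : ℕ) < (l : ℕ)) (k l : Fin n) :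
    (Hmat up - 1) k l = ∑ i ∈ Finset.Ico 1 n, (Gmat up ^ i) k l := by
  have hn : 0 < n := k.pos
  rw [Hmat_eq hup]
  simp only [Matrix.sub_apply, Matrix.sum_apply]
  rw [Finset.range_eq_Ico, Finset.sum_eq_sum_Ico_succ_bot hn (fun i => (Gmat up ^ i) k l)]
  simp [Matrix.one_apply]

lemma Hsub_nonneg (hup : ∀ l k, up l = some k → (k : ℕ) < (l : ℕ)) (k l : Fin n) :
    0 ≤ (Hmat up - 1) k l := by
  rw [Hsub_apply hup]
  exact Finset.sum_nonneg fun i _ => Gpow_nonneg i k l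

lemma Hsub_zero (hup : ∀ l k, up l = some k → (k : ℕ) < (l : ℕ)) (k l : Fin n)
    (h : (l : ℕ) ≤ (k : ℕ)) : (Hmat up - 1) k l = 0 := by
  rw [Hsub_apply hup]
  refine Finset.sum_eq_zero fun i hi => ?_
  by_contra hc
  have := Gpow_entry hup i k l hc
  simp only [Finset.mem_Ico] at hi
  omega

lemma flow_eq (hup : ∀ l k, up l = some k → (k : ℕ) < (l : ℕ))
    (W s : Fin n → ℝ) (h : ∀ l, W l = s l + csum up W l) :
    W = Hmat up *ᵥ s := by
  have h1 : (1 - Gmat up) *ᵥ W = s := by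
    funext l
    rw [Matrix.sub_mulVec, Matrix.one_mulVec]
    have := h l
    rw [csum_eq] at this
    simp only [Pi.sub_apply]
    linarith
  calc W = (Hmat up * (1 - Gmat up)) *ᵥ W := by
        rw [Hmat_mul_cancel hup, Matrix.one_mulVec]
    _ = Hmat up *ᵥ ((1 - Gmat up) *ᵥ W) := (Matrix.mulVec_mulVec _ _ _).symm
    _ = Hmat up *ᵥ s := by rw [h1]

lemma up_elim_eq (vv : Fin n → ℝ) (v₀ : ℝ) (l : Fin n) :
    (up l).elim v₀ vv = ((Gmat up)ᵀ *ᵥ vv) l + (if up l = none then v₀ else 0) := by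
  cases h : up l with
  | none => simp [h, Matrix.mulVec, dotProduct, Gmat, transpose_apply]
  | some k =>
    simp [Matrix.mulVec, dotProduct, Gmat, transpose_apply, ite_mul, h]

lemma sq_le_max {a t c : ℝ} (h1 : a ≤ t) (h2 : t ≤ c) : t ^ 2 ≤ max (c ^ 2) (a ^ 2) := by
  rcases le_total 0 t with h | h
  · exact le_max_of_le_left (by nlinarith)
  · exact le_max_of_le_right (by nlinarith)

end helpers

section main
variable {n : ℕ} {up : Fin n → Option (Fin n)}

lemma fb_bound (hup : ∀ l k, up l = some k → (k : ℕ) < (l : ℕ))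
    (r x g b p q : Fin n → ℝ)
    (hr : ∀ l, 0 ≤ r l) (hx : ∀ l, 0 ≤ x l)
    (P Q v f : Fin n → ℝ) (hv : ∀ l, 0 < v l) (hf0 : ∀ l, 0 ≤ f l)
    (h1aP : ∀ l, P l = p l + g l * v l + r l * f l + csum up P l)
    (h1aQ : ∀ l, Q l = q l + b l * v l + x l * f l + csum up Q l)
    (h1c : ∀ l, f l * v l = (P l - r l * f l) ^ 2 + (Q l - x l * f l) ^ 2)
    (Pl Ql Pb Qb fb : Fin n → ℝ)
    (h3cP : ∀ l, Pl l = p l + g l * v l + csum up Pl l)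
    (h3cQ : ∀ l, Ql l = q l + b l * v l + csum up Ql l)
    (h3dP : ∀ l, Pb l = p l + g l * v l + r l * fb l + csum up Pb l)
    (h3dQ : ∀ l, Qb l = q l + b l * v l + x l * fb l + csum up Qb l)
    (h3e : ∀ l, max ((Pb l - r l * fb l) ^ 2) ((Pl l) ^ 2)
        + max ((Qb l - x l * fb l) ^ 2) ((Ql l) ^ 2) ≤ fb l * v l) :
    ∀ l, f l ≤ fb l := by
  have hPbP : (fun m => Pb m - P m) = Hmat up *ᵥ (fun m => r m * (fb m - f m)) := by
    apply flow_eq hup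
    intro l
    have e1 := h1aP l; have e2 := h3dP l
    have e3 := csum_sub (up := up) Pb P l
    have : r l * (fb l - f l) = r l * fb l - r l * f l := by ring
    rw [e3, this]
    linarith
  have hQbQ : (fun m => Qb m - Q m) = Hmat up *ᵥ (fun m => x m * (fb m - f m)) := by
    apply flow_eq hup
    intro l
    have e1 := h1aQ l; have e2 := h3dQ l
    have e3 := csum_sub (up := up) Qb Q l
    have : x l * (fb l - f l) = x l * fb l - x l * f l := by ring
    rw [e3, this]
    linarith
  have hPPl : (fun m => P m - Pl m) = Hmat up *ᵥ (fun m => r m * f m) := by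
    apply flow_eq hup
    intro l
    have e1 := h1aP l; have e2 := h3cP l
    have e3 := csum_sub (up := up) P Pl l
    rw [e3]
    linarith
  have hQQl : (fun m => Q m - Ql m) = Hmat up *ᵥ (fun m => x m * f m) := by
    apply flow_eq hup
    intro l
    have e1 := h1aQ l; have e2 := h3cQ l
    have e3 := csum_sub (up := up) Q Ql l
    rw [e3]
    linarith
  -- pointwise (H-1) formulas
  have keyPb : ∀ l, (Pb l - r l * fb l) - (P l - r l * f l)
      = ∑ m, (Hmat up - 1) l m * (r m * (fb m - f m)) := by
    intro l
    have e := congrFun hPbP l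
    have e2 : ((Hmat up - 1) *ᵥ (fun m => r m * (fb m - f m))) l
        = (Hmat up *ᵥ (fun m => r m * (fb m - f m))) l - r l * (fb l - f l) := by
      rw [Matrix.sub_mulVec, Matrix.one_mulVec]; simp
    have e3 : ((Hmat up - 1) *ᵥ (fun m => r m * (fb m - f m))) l
        = ∑ m, (Hmat up - 1) l m * (r m * (fb m - f m)) := by
      simp [Matrix.mulVec, dotProduct]
    rw [← e3, e2, ← e]
    ring
  have keyQb : ∀ l, (Qb l - x l * fb l) - (Q l - x l * f l)
      = ∑ m, (Hmat up - 1) l m * (x m * (fb m - f m)) := by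
    intro l
    have e := congrFun hQbQ l
    have e2 : ((Hmat up - 1) *ᵥ (fun m => x m * (fb m - f m))) l
        = (Hmat up *ᵥ (fun m => x m * (fb m - f m))) l - x l * (fb l - f l) := by
      rw [Matrix.sub_mulVec, Matrix.one_mulVec]; simp
    have e3 : ((Hmat up - 1) *ᵥ (fun m => x m * (fb m - f m))) l
        = ∑ m, (Hmat up - 1) l m * (x m * (fb m - f m)) := by
      simp [Matrix.mulVec, dotProduct]
    rw [← e3, e2, ← e]
    ring
  have keyPl : ∀ l, (P l - r l * f l) - Pl l = ∑ m, (Hmat up - 1) l m * (r m * f m) := by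
    intro l
    have e := congrFun hPPl l
    have e2 : ((Hmat up - 1) *ᵥ (fun m => r m * f m)) l
        = (Hmat up *ᵥ (fun m => r m * f m)) l - r l * f l := by
      rw [Matrix.sub_mulVec, Matrix.one_mulVec]; simp
    have e3 : ((Hmat up - 1) *ᵥ (fun m => r m * f m)) l
        = ∑ m, (Hmat up - 1) l m * (r m * f m) := by
      simp [Matrix.mulVec, dotProduct]
    rw [← e3, e2, ← e]
    ring
  have keyQl : ∀ l, (Q l - x l * f l) - Ql l = ∑ m, (Hmat up - 1) l m * (x m * f m) := by
    intro l
    have e := congrFun hQQl l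
    have e2 : ((Hmat up - 1) *ᵥ (fun m => x m * f m)) l
        = (Hmat up *ᵥ (fun m => x m * f m)) l - x l * f l := by
      rw [Matrix.sub_mulVec, Matrix.one_mulVec]; simp
    have e3 : ((Hmat up - 1) *ᵥ (fun m => x m * f m)) l
        = ∑ m, (Hmat up - 1) l m * (x m * f m) := by
      simp [Matrix.mulVec, dotProduct]
    rw [← e3, e2, ← e]
    ring
  have hPlo : ∀ l, Pl l ≤ P l - r l * f l := by
    intro l
    have := keyPl l
    have hnn : 0 ≤ ∑ m, (Hmat up - 1) l m * (r m * f m) :=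
      Finset.sum_nonneg fun m _ =>
        mul_nonneg (Hsub_nonneg hup l m) (mul_nonneg (hr m) (hf0 m))
    linarith
  have hQlo : ∀ l, Ql l ≤ Q l - x l * f l := by
    intro l
    have := keyQl l
    have hnn : 0 ≤ ∑ m, (Hmat up - 1) l m * (x m * f m) :=
      Finset.sum_nonneg fun m _ =>
        mul_nonneg (Hsub_nonneg hup l m) (mul_nonneg (hx m) (hf0 m))
    linarith
  have key : ∀ d : ℕ, ∀ l : Fin n, n - (l : ℕ) ≤ d → f l ≤ fb l := by
    intro d
    induction d with
    | zero => intro l hl; exact absurd hl (by have := l.isLt; omega)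
    | succ d ih =>
      intro l hl
      have IH : ∀ m : Fin n, (l : ℕ) < (m : ℕ) → f m ≤ fb m := by
        intro m hm
        exact ih m (by have := m.isLt; omega)
      have hsum : ∀ (y : Fin n → ℝ), (∀ m, 0 ≤ y m) →
          0 ≤ ∑ m, (Hmat up - 1) l m * (y m * (fb m - f m)) := by
        intro y hy
        refine Finset.sum_nonneg fun m _ => ?_
        rcases le_or_gt (m : ℕ) (l : ℕ) with hml | hml
        · rw [Hsub_zero hup l m hml, zero_mul]
        · exact mul_nonneg (Hsub_nonneg hup l m)
            (mul_nonneg (hy m) (by linarith [IH m hml]))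
      have hPup : P l - r l * f l ≤ Pb l - r l * fb l := by
        have := keyPb l
        have := hsum r hr
        linarith
      have hQup : Q l - x l * f l ≤ Qb l - x l * fb l := by
        have := keyQb l
        have := hsum x hx
        linarith
      have b1 := sq_le_max (hPlo l) hPup
      have b2 := sq_le_max (hQlo l) hQup
      have h2 := h1c l
      have h3 := h3e l
      have : f l * v l ≤ fb l * v l := by linarith
      exact le_of_mul_le_mul_right this (hv l)
  intro l
  exact key n l (by omega)

end main

section main2
variable {n : ℕ} {up : Fin n → Option (Fin n)}

lemma v_le_vhat (hup : ∀ l k, up l = some k → (k : ℕ) < (l : ℕ))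
    (r x g b p q : Fin n → ℝ) (v₀ : ℝ)
    (h8a : IsUnit (Amat up r x g b))
    (h8b : ∀ k l, 0 ≤ Dmat up r x g b k l)
    (P Q v f : Fin n → ℝ) (hf0 : ∀ l, 0 ≤ f l)
    (h1aP : ∀ l, P l = p l + g l * v l + r l * f l + csum up P l)
    (h1aQ : ∀ l, Q l = q l + b l * v l + x l * f l + csum up Q l)
    (h1b : ∀ l, v l = (up l).elim v₀ v - 2 * (r l * P l + x l * Q l)
        + ((r l) ^ 2 + (x l) ^ 2) * f l)
    (Phat Qhat vhat : Fin n → ℝ)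
    (h3aP : ∀ l, Phat l = p l + g l * vhat l + csum up Phat l)
    (h3aQ : ∀ l, Qhat l = q l + b l * vhat l + csum up Qhat l)
    (h3b : ∀ l, vhat l = (up l).elim v₀ vhat - 2 * (r l * Phat l + x l * Qhat l)) :
    ∀ l, v l ≤ vhat l := by
  have hPhatP : (fun m => Phat m - P m)
      = Hmat up *ᵥ ((fun m => g m * (vhat m - v m)) - fun m => r m * f m) := by
    apply flow_eq hup
    intro l
    rw [csum_sub]
    have h1 := h3aP l; have h2 := h1aP l
    have hx2 : ((fun m => g m * (vhat m - v m)) - fun m => r m * f m) l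
        = g l * vhat l - g l * v l - r l * f l := by
      simp only [Pi.sub_apply]; ring
    rw [hx2]
    linarith
  have hQhatQ : (fun m => Qhat m - Q m)
      = Hmat up *ᵥ ((fun m => b m * (vhat m - v m)) - fun m => x m * f m) := by
    apply flow_eq hup
    intro l
    rw [csum_sub]
    have h1 := h3aQ l; have h2 := h1aQ l
    have hx2 : ((fun m => b m * (vhat m - v m)) - fun m => x m * f m) l
        = b l * vhat l - b l * v l - x l * f l := by
      simp only [Pi.sub_apply]; ring
    rw [hx2]
    linarith
  have Ev : ∀ l, ((1 - (Gmat up)ᵀ) *ᵥ (vhat - v)) l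
      = -(2 * (r l * (Phat l - P l) + x l * (Qhat l - Q l)))
        - ((r l) ^ 2 + (x l) ^ 2) * f l := by
    intro l
    have e1 := up_elim_eq (up := up) v v₀ l
    have e2 := up_elim_eq (up := up) vhat v₀ l
    have h1 := h1b l; have h2 := h3b l
    rw [e1] at h1; rw [e2] at h2
    have hms : (1 - (Gmat up)ᵀ) *ᵥ (vhat - v)
        = (vhat - v) - ((Gmat up)ᵀ *ᵥ vhat - (Gmat up)ᵀ *ᵥ v) := by
      rw [Matrix.sub_mulVec, Matrix.one_mulVec, Matrix.mulVec_sub]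
    rw [hms]
    simp only [Pi.sub_apply]
    linarith
  have hM1 : ∀ l, (M1 up r g *ᵥ (vhat - v)) l
      = 2 * (r l * ((Hmat up *ᵥ (fun m => g m * (vhat m - v m))) l)) := by
    intro l
    have hgw : diagonal g *ᵥ (vhat - v) = fun m => g m * (vhat m - v m) := by
      funext m; rw [Matrix.mulVec_diagonal]; simp
    simp only [M1, Matrix.smul_mulVec, ← Matrix.mulVec_mulVec, hgw,
      Pi.smul_apply, smul_eq_mul, Matrix.mulVec_diagonal]
  have hM2 : ∀ l, (M2 up x b *ᵥ (vhat - v)) l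
      = 2 * (x l * ((Hmat up *ᵥ (fun m => b m * (vhat m - v m))) l)) := by
    intro l
    have hbw : diagonal b *ᵥ (vhat - v) = fun m => b m * (vhat m - v m) := by
      funext m; rw [Matrix.mulVec_diagonal]; simp
    simp only [M2, Matrix.smul_mulVec, ← Matrix.mulVec_mulVec, hbw,
      Pi.smul_apply, smul_eq_mul, Matrix.mulVec_diagonal]
  have EA : ∀ l, (Amat up r x g b *ᵥ (vhat - v)) l
      = 2 * (r l * (((Hmat up - 1) *ᵥ (fun m => r m * f m)) l))
        + 2 * (x l * (((Hmat up - 1) *ᵥ (fun m => x m * f m)) l))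
        + ((r l) ^ 2 + (x l) ^ 2) * f l := by
    intro l
    have hAl : (Amat up r x g b *ᵥ (vhat - v)) l
        = ((1 - (Gmat up)ᵀ) *ᵥ (vhat - v)) l + (M1 up r g *ᵥ (vhat - v)) l
          + (M2 up x b *ᵥ (vhat - v)) l := by
      simp only [Amat, Matrix.add_mulVec, Pi.add_apply]
    have e0 := Ev l
    have e1 := hM1 l
    have e2 := hM2 l
    have ePh : Phat l - P l
        = (Hmat up *ᵥ ((fun m => g m * (vhat m - v m)) - fun m => r m * f m)) l := by
      have := congrFun hPhatP l; simpa using this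
    have eQh : Qhat l - Q l
        = (Hmat up *ᵥ ((fun m => b m * (vhat m - v m)) - fun m => x m * f m)) l := by
      have := congrFun hQhatQ l; simpa using this
    have hsplit1 : (Hmat up *ᵥ ((fun m => g m * (vhat m - v m)) - fun m => r m * f m)) l
        = (Hmat up *ᵥ (fun m => g m * (vhat m - v m))) l
          - (Hmat up *ᵥ (fun m => r m * f m)) l := by
      rw [Matrix.mulVec_sub]; simp
    have hsplit2 : (Hmat up *ᵥ ((fun m => b m * (vhat m - v m)) - fun m => x m * f m)) l
        = (Hmat up *ᵥ (fun m => b m * (vhat m - v m))) l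
          - (Hmat up *ᵥ (fun m => x m * f m)) l := by
      rw [Matrix.mulVec_sub]; simp
    have hH1 : ((Hmat up - 1) *ᵥ (fun m => r m * f m)) l
        = (Hmat up *ᵥ (fun m => r m * f m)) l - r l * f l := by
      rw [Matrix.sub_mulVec, Matrix.one_mulVec]; simp
    have hH2 : ((Hmat up - 1) *ᵥ (fun m => x m * f m)) l
        = (Hmat up *ᵥ (fun m => x m * f m)) l - x l * f l := by
      rw [Matrix.sub_mulVec, Matrix.one_mulVec]; simp
    rw [hAl, e0, e1, e2]
    linear_combination (-2 * r l) * ePh + (-2 * r l) * hsplit1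
      + (-2 * x l) * eQh + (-2 * x l) * hsplit2
      + (-2 * r l) * hH1 + (-2 * x l) * hH2
  have hrf : diagonal r *ᵥ f = fun m => r m * f m := by
    funext m; rw [Matrix.mulVec_diagonal]
  have hxf : diagonal x *ᵥ f = fun m => x m * f m := by
    funext m; rw [Matrix.mulVec_diagonal]
  have hDS : Dmat up r x g b = Cmat up r x g b *
      ((2 : ℝ) • (diagonal r * (Hmat up - 1) * diagonal r)
        + (2 : ℝ) • (diagonal x * (Hmat up - 1) * diagonal x)
        + diagonal (fun l => (r l) ^ 2 + (x l) ^ 2)) := by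
    simp only [Dmat, Matrix.mul_add, mul_smul_comm, Matrix.mul_assoc]
  have hSf : ((2 : ℝ) • (diagonal r * (Hmat up - 1) * diagonal r)
        + (2 : ℝ) • (diagonal x * (Hmat up - 1) * diagonal x)
        + diagonal (fun l => (r l) ^ 2 + (x l) ^ 2)) *ᵥ f
      = fun l => 2 * (r l * (((Hmat up - 1) *ᵥ (fun m => r m * f m)) l))
        + 2 * (x l * (((Hmat up - 1) *ᵥ (fun m => x m * f m)) l))
        + ((r l) ^ 2 + (x l) ^ 2) * f l := by
    funext l
    simp only [Matrix.add_mulVec, Matrix.smul_mulVec, ← Matrix.mulVec_mulVec,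
      hrf, hxf, Pi.add_apply, Pi.smul_apply, smul_eq_mul, Matrix.mulVec_diagonal]
  have hCA : Cmat up r x g b * Amat up r x g b = 1 :=
    Matrix.nonsing_inv_mul _ ((Matrix.isUnit_iff_isUnit_det _).mp h8a)
  have hw : vhat - v = Dmat up r x g b *ᵥ f := by
    have h1 : vhat - v = Cmat up r x g b *ᵥ (Amat up r x g b *ᵥ (vhat - v)) := by
      rw [Matrix.mulVec_mulVec, hCA, Matrix.one_mulVec]
    rw [h1, funext EA, ← hSf, Matrix.mulVec_mulVec, ← hDS]
  intro l
  have h1 : (vhat - v) l = (Dmat up r x g b *ᵥ f) l := congrFun hw l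
  have h2 : 0 ≤ (Dmat up r x g b *ᵥ f) l := by
    rw [Matrix.mulVec, dotProduct]
    exact Finset.sum_nonneg fun m _ => mul_nonneg (h8b l m) (hf0 m)
  simp only [Pi.sub_apply] at h1
  linarith

end main2

/-- Lemma II.  Under conditions (8.a)–(8.b), any exact DistFlow solution
accompanied by MAR-OPF auxiliary variables that satisfy the conservative security bounds
also satisfies the original security constraints. -/
theorem stmt12 (n : ℕ) (up : Fin n → Option (Fin n))
    (hup : ∀ l k, up l = some k → (k : ℕ) < (l : ℕ))
    (r x g b : Fin n → ℝ)
    (hr : ∀ l, 0 ≤ r l) (hx : ∀ l, 0 ≤ x l) (hg : ∀ l, 0 ≤ g l) (hb : ∀ l, 0 ≤ b l)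
    (p q : Fin n → ℝ) (v₀ : ℝ) (hv₀ : 0 < v₀)
    (vmin vmax Imax : Fin n → ℝ)
    (h8a : IsUnit (Amat up r x g b))
    (h8b : ∀ k l, 0 ≤ Dmat up r x g b k l)
    (P Q v f : Fin n → ℝ) (hv : ∀ l, 0 < v l)
    -- exact DistFlow equations (1.a)–(1.c)
    (h1aP : ∀ l, P l = p l + g l * v l + r l * f l + csum up P l)
    (h1aQ : ∀ l, Q l = q l + b l * v l + x l * f l + csum up Q l)
    (h1b : ∀ l, v l = (up l).elim v₀ v - 2 * (r l * P l + x l * Q l)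
        + ((r l) ^ 2 + (x l) ^ 2) * f l)
    (h1c : ∀ l, f l * v l = (P l - r l * f l) ^ 2 + (Q l - x l * f l) ^ 2)
    (Phat Qhat vhat Pl Ql Pb Qb fb : Fin n → ℝ)
    -- lossless equations (3.a)–(3.b)
    (h3aP : ∀ l, Phat l = p l + g l * vhat l + csum up Phat l)
    (h3aQ : ∀ l, Qhat l = q l + b l * vhat l + csum up Qhat l)
    (h3b : ∀ l, vhat l = (up l).elim v₀ vhat - 2 * (r l * Phat l + x l * Qhat l))
    -- bound equations (3.c)–(3.e)
    (h3cP : ∀ l, Pl l = p l + g l * v l + csum up Pl l)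
    (h3cQ : ∀ l, Ql l = q l + b l * v l + csum up Ql l)
    (h3dP : ∀ l, Pb l = p l + g l * v l + r l * fb l + csum up Pb l)
    (h3dQ : ∀ l, Qb l = q l + b l * v l + x l * fb l + csum up Qb l)
    (h3e : ∀ l, max ((Pb l - r l * fb l) ^ 2) ((Pl l) ^ 2)
        + max ((Qb l - x l * fb l) ^ 2) ((Ql l) ^ 2) ≤ fb l * v l)
    -- conservative security bounds
    (hsec1 : ∀ l, vmin l ≤ v l) (hsec2 : ∀ l, vhat l ≤ vmax l)
    (hsec3 : ∀ l, fb l ≤ Imax l) :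
    ∀ l, vmin l ≤ v l ∧ v l ≤ vmax l ∧ f l ≤ Imax l := by
  have hf0 : ∀ l, 0 ≤ f l := by
    intro l
    have h := h1c l
    have h2 : (0 : ℝ) * v l ≤ f l * v l := by
      nlinarith [sq_nonneg (P l - r l * f l), sq_nonneg (Q l - x l * f l)]
    exact le_of_mul_le_mul_right (by simpa using h2) (hv l)
  have hffb := fb_bound hup r x g b p q hr hx P Q v f hv hf0 h1aP h1aQ h1c
    Pl Ql Pb Qb fb h3cP h3cQ h3dP h3dQ h3e
  have hvv := v_le_vhat hup r x g b p q v₀ h8a h8b P Q v f hf0 h1aP h1aQ h1b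
    Phat Qhat vhat h3aP h3aQ h3b
  intro l
  exact ⟨hsec1 l, le_trans (hvv l) (hsec2 l), le_trans (hffb l) (hsec3 l)⟩
end
end

section
/- Assume the radial network encoding with H := (1 − G)⁻¹, and let p, g, v, r, f, P : Fin n → ℝ. Then the per-line power-balance equations P l = p l + g l * v l + r l * f l + ∑_{m ∈ children l} P m hold for every l : Fin n if and only if P = H.mulVec p + (H·diag(g)).mulVec v + (H·diag(r)).mulVec f (equation (13) of the paper). -/
open Matrix

noncomputable section

lemma csum_eq_mulVec {n : ℕ} (up : Fin n → Option (Fin n)) (P : Fin n → ℝ) (l : Fin n) :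
    csum up P l = (Gmat up).mulVec P l := by
  simp only [csum, Gmat, mulVec, dotProduct, of_apply, ite_mul, one_mul, zero_mul]
  rw [Finset.sum_filter]

lemma unit_det {n : ℕ} (up : Fin n → Option (Fin n))
    (hup : ∀ l k, up l = some k → (k : ℕ) < (l : ℕ)) :
    IsUnit (1 - Gmat up).det := by
  have hbt : (1 - Gmat up).BlockTriangular id := by
    intro i j hij
    have hij' : (j : ℕ) < (i : ℕ) := hij
    simp only [Matrix.sub_apply, Matrix.one_apply, Gmat, of_apply]
    rw [if_neg, if_neg]
    · simp
    · intro h; exact absurd (hup j i h) (Nat.lt_asymm hij')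
    · intro h; subst h; exact lt_irrefl _ hij
  rw [Matrix.det_of_upperTriangular hbt]
  have hd : ∀ i, (1 - Gmat up) i i = 1 := by
    intro i
    simp only [Matrix.sub_apply, Matrix.one_apply_eq, Gmat, of_apply]
    rw [if_neg fun h => absurd (hup i i h) (lt_irrefl _)]
    ring
  simp [hd]

/-- equation (13) of the paper: the per-line power-balance recursions hold
iff `P = H p + H diag(g) v + H diag(r) f`. -/
theorem stmt15 (n : ℕ) (up : Fin n → Option (Fin n))
    (hup : ∀ l k, up l = some k → (k : ℕ) < (l : ℕ))
    (p g v r f P : Fin n → ℝ) :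
    (∀ l, P l = p l + g l * v l + r l * f l + csum up P l) ↔
      P = (Hmat up).mulVec p + (Hmat up * diagonal g).mulVec v
        + (Hmat up * diagonal r).mulVec f := by
  have hdet := unit_det up hup
  set q : Fin n → ℝ := fun l => p l + g l * v l + r l * f l with hq
  have key : (∀ l, P l = p l + g l * v l + r l * f l + csum up P l) ↔
      (1 - Gmat up).mulVec P = q := by
    constructor
    · intro h; funext l
      rw [sub_mulVec, one_mulVec]
      have := h l
      rw [csum_eq_mulVec] at this
      simp [hq]; linarith
    · intro h l
      have := congrFun h l
      rw [sub_mulVec, one_mulVec] at this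
      rw [csum_eq_mulVec]
      simp [hq] at this
      linarith
  have hinv : (Hmat up) * (1 - Gmat up) = 1 := Matrix.nonsing_inv_mul _ hdet
  have hinv' : (1 - Gmat up) * (Hmat up) = 1 := Matrix.mul_nonsing_inv _ hdet
  have key2 : (1 - Gmat up).mulVec P = q ↔ P = (Hmat up).mulVec q := by
    constructor
    · intro h
      rw [← h, mulVec_mulVec, hinv, one_mulVec]
    · intro h
      rw [h, mulVec_mulVec, hinv', one_mulVec]
  have hqeq : (Hmat up).mulVec q = (Hmat up).mulVec p + (Hmat up * diagonal g).mulVec v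
        + (Hmat up * diagonal r).mulVec f := by
    have : q = p + (diagonal g).mulVec v + (diagonal r).mulVec f := by
      funext l; simp [hq, mulVec_diagonal]
    rw [this, mulVec_add, mulVec_add, ← mulVec_mulVec, ← mulVec_mulVec]
  rw [key, key2, hqeq]
end
end
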